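/- Let T be a tree with diameter 4 and unique central vertex c. If S is a proper convex set of TT̄ containing two vertices u, v of T with d_T(u,v) = 4, then |S| ≤ n(T). -/

import Mathlib

open SimpleGraph

/-- Adjacency of the complementary prism: copies of `G` and `Gᶜ` joined by a perfect matching. -/
def prismAdj {V : Type*} (G : SimpleGraph V) : V ⊕ V → V ⊕ V → Prop
  | Sum.inl a, Sum.inl b => G.Adj a b
  | Sum.inr a, Sum.inr b => Gᶜ.Adj a b
  | Sum.inl a, Sum.inr b => a = b
  | Sum.inr a, Sum.inl b => a = b

/-- The complementary prism `G G̅` of a graph `G`. -/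
def compPrism {V : Type*} (G : SimpleGraph V) : SimpleGraph (V ⊕ V) where
  Adj := prismAdj G
  symm := by
    constructor
    rintro (a | a) (b | b) h
    · exact h.symm
    · exact h.symm
    · exact h.symm
    · exact h.symm
  loopless := by
    constructor
    rintro (a | a) h
    · exact G.loopless.irrefl a h
    · exact Gᶜ.loopless.irrefl a h

/-- `w` lies on some shortest `u,v`-path (geodesic) of `H`. -/
def inInterval {V : Type*} (H : SimpleGraph V) (u v w : V) : Prop :=
  ∃ p : H.Walk u v, p.IsPath ∧ p.length = H.dist u v ∧ w ∈ p.support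

/-- A set of vertices is geodesically convex. -/
def IsGeoConvex {V : Type*} (H : SimpleGraph V) (S : Set V) : Prop :=
  ∀ u ∈ S, ∀ v ∈ S, ∀ w, inInterval H u v w → w ∈ S

/-- The geodesic convex hull: the smallest convex set containing `S`. -/
def geoHull {V : Type*} (H : SimpleGraph V) (S : Set V) : Set V :=
  ⋂₀ {C | IsGeoConvex H C ∧ S ⊆ C}

/-- The convexity number: maximum cardinality of a proper convex set. -/
noncomputable def convexityNumber {V : Type*} (H : SimpleGraph V) : ℕ :=
  sSup {n | ∃ S : Set V, IsGeoConvex H S ∧ S ≠ Set.univ ∧ S.ncard = n}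

/-- The diameter of a graph. -/
noncomputable def graphDiam {V : Type*} (H : SimpleGraph V) : ℕ :=
  sSup {d | ∃ u v : V, H.dist u v = d}

/-- The eccentricity of a vertex. -/
noncomputable def graphEcc {V : Type*} (H : SimpleGraph V) (u : V) : ℕ :=
  sSup {d | ∃ v : V, H.dist u v = d}

/-- The degree of a vertex. -/
noncomputable def vdeg {V : Type*} (H : SimpleGraph V) (v : V) : ℕ :=
  (H.neighborSet v).ncard

/-- The maximum degree. -/
noncomputable def maxDeg {V : Type*} (H : SimpleGraph V) : ℕ :=
  sSup {d | ∃ v : V, vdeg H v = d}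

/-- The number of pendant neighbours of a vertex. -/
noncomputable def pendCount {V : Type*} (H : SimpleGraph V) (w : V) : ℕ :=
  {v ∈ H.neighborSet w | vdeg H v = 1}.ncard

section PrismAux
variable {V : Type*} {T : SimpleGraph V} {S : Set (V ⊕ V)}

@[simp] lemma compPrism_adj_ll {a b : V} :
    (compPrism T).Adj (Sum.inl a) (Sum.inl b) ↔ T.Adj a b := Iff.rfl

@[simp] lemma compPrism_adj_rr {a b : V} :
    (compPrism T).Adj (Sum.inr a) (Sum.inr b) ↔ (a ≠ b ∧ ¬ T.Adj a b) := compl_adj T a b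

@[simp] lemma compPrism_adj_lr {a b : V} :
    (compPrism T).Adj (Sum.inl a) (Sum.inr b) ↔ a = b := Iff.rfl

@[simp] lemma compPrism_adj_rl {a b : V} :
    (compPrism T).Adj (Sum.inr a) (Sum.inl b) ↔ a = b := Iff.rfl

end PrismAux

set_option linter.unusedSectionVars false

section AuxGeneric
variable {W : Type*} {G : SimpleGraph W}

lemma aux_adj_of_walk_length_one {a b : W} (w : G.Walk a b) (h : w.length = 1) : G.Adj a b := by
  cases w with
  | nil => simp at h
  | cons h1 p =>
    cases p with
    | nil => exact h1
    | cons h2 q => simp [SimpleGraph.Walk.length_cons] at h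

lemma aux_walk_length_two {a b : W} (w : G.Walk a b) (h : w.length = 2) :
    ∃ m, G.Adj a m ∧ G.Adj m b := by
  cases w with
  | nil => simp at h
  | cons h1 p =>
    cases p with
    | nil => simp at h
    | cons h2 q =>
      cases q with
      | nil => exact ⟨_, h1, h2⟩
      | cons h3 r => simp [SimpleGraph.Walk.length_cons] at h

lemma aux_walk_length_four {a b : W} (p : G.Walk a b) (h : p.length = 4) :
    ∃ (x1 x2 x3 : W) (h1 : G.Adj a x1) (h2 : G.Adj x1 x2) (h3 : G.Adj x2 x3) (h4 : G.Adj x3 b),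
      p = Walk.cons h1 (Walk.cons h2 (Walk.cons h3 (Walk.cons h4 Walk.nil))) := by
  cases p with
  | nil => simp at h
  | cons h1 p => cases p with
    | nil => simp at h
    | cons h2 p => cases p with
      | nil => simp at h
      | cons h3 p => cases p with
        | nil => simp at h
        | cons h4 p => cases p with
          | nil => exact ⟨_, _, _, h1, h2, h3, h4, rfl⟩
          | cons h5 p => simp [SimpleGraph.Walk.length_cons] at h

lemma aux_dist_eq_two {a b m : W} (hne : a ≠ b) (hna : ¬ G.Adj a b)
    (h1 : G.Adj a m) (h2 : G.Adj m b) : G.dist a b = 2 := by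
  have hw : G.dist a b ≤ 2 := by
    simpa using SimpleGraph.dist_le (Walk.cons h1 (Walk.cons h2 Walk.nil))
  have hr : G.Reachable a b := ⟨Walk.cons h1 (Walk.cons h2 Walk.nil)⟩
  have h0 : G.dist a b ≠ 0 := fun hz => hne (hr.dist_eq_zero_iff.mp hz)
  have h1' : G.dist a b ≠ 1 := by
    intro he
    obtain ⟨w, hw'⟩ := hr.exists_walk_length_eq_dist
    exact hna (aux_adj_of_walk_length_one w (by rw [hw', he]))
  omega

lemma aux_dist_eq_three {a b m1 m2 : W} (hne : a ≠ b) (hna : ¬ G.Adj a b)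
    (hno : ∀ m, ¬ (G.Adj a m ∧ G.Adj m b))
    (h1 : G.Adj a m1) (h2 : G.Adj m1 m2) (h3 : G.Adj m2 b) : G.dist a b = 3 := by
  have hw : G.dist a b ≤ 3 := by
    simpa using SimpleGraph.dist_le (Walk.cons h1 (Walk.cons h2 (Walk.cons h3 Walk.nil)))
  have hr : G.Reachable a b := ⟨Walk.cons h1 (Walk.cons h2 (Walk.cons h3 Walk.nil))⟩
  have h0 : G.dist a b ≠ 0 := fun hz => hne (hr.dist_eq_zero_iff.mp hz)
  have h1' : G.dist a b ≠ 1 := by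
    intro he
    obtain ⟨w, hw'⟩ := hr.exists_walk_length_eq_dist
    exact hna (aux_adj_of_walk_length_one w (by rw [hw', he]))
  have h2' : G.dist a b ≠ 2 := by
    intro he
    obtain ⟨w, hw'⟩ := hr.exists_walk_length_eq_dist
    obtain ⟨m, hm1, hm2⟩ := aux_walk_length_two w (by rw [hw', he])
    exact hno m ⟨hm1, hm2⟩
  omega

end AuxGeneric

section AuxTree
variable {W : Type*} [DecidableEq W] {T : SimpleGraph W}

lemma aux_tree_path_length (hT : T.IsTree) {a b : W} {p : T.Walk a b} (hp : p.IsPath) :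
    p.length = T.dist a b := by
  obtain ⟨w, hw⟩ := (hT.isConnected a b).exists_walk_length_eq_dist
  have hbp : w.bypass.IsPath := SimpleGraph.Walk.bypass_isPath w
  have hlen : w.bypass.length = T.dist a b := by
    have h1 := SimpleGraph.Walk.length_bypass_le w
    have h2 := SimpleGraph.dist_le w.bypass
    omega
  obtain ⟨q, -, hq⟩ := hT.existsUnique_path a b
  have e1 : p = w.bypass := (hq p hp).trans (hq w.bypass hbp).symm
  rw [e1, hlen]

lemma aux_tree_split (hT : T.IsTree) {a b : W} {P : T.Walk a b} (hP : P.IsPath)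
    {t : W} (ht : t ∈ P.support) : T.dist a t + T.dist t b = T.dist a b := by
  classical
  have h1 : (P.takeUntil t ht).length = T.dist a t :=
    aux_tree_path_length hT (hP.takeUntil ht)
  have h2 : (P.dropUntil t ht).length = T.dist t b :=
    aux_tree_path_length hT (hP.dropUntil ht)
  have h3 := congrArg SimpleGraph.Walk.length (P.take_spec ht)
  rw [SimpleGraph.Walk.length_append] at h3
  rw [← aux_tree_path_length hT hP, ← h3, h1, h2]

lemma aux_tree_ord (hT : T.IsTree) {c z : W} {P : T.Walk c z} (hP : P.IsPath)
    {s t : W} (hs : s ∈ P.support) (ht : t ∈ P.support) :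
    T.dist c s + T.dist s t = T.dist c t ∨ T.dist c t + T.dist t s = T.dist c s := by
  classical
  have hsplit_s := aux_tree_split hT hP hs
  have hsplit_t := aux_tree_split hT hP ht
  have ht' : t ∈ (P.takeUntil s hs).support ∨ t ∈ (P.dropUntil s hs).support := by
    rw [← SimpleGraph.Walk.mem_support_append_iff, P.take_spec hs]; exact ht
  cases ht' with
  | inl h =>
    right
    have := aux_tree_split hT (hP.takeUntil hs) h
    have hl : (P.takeUntil s hs).length = T.dist c s :=
      aux_tree_path_length hT (hP.takeUntil hs)
    omega
  | inr h =>
    left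
    have := aux_tree_split hT (hP.dropUntil hs) h
    omega

lemma aux_tree_adj_dist_ne (hT : T.IsTree) {c w x : W} (hwx : T.Adj w x) :
    T.dist c w ≠ T.dist c x := by
  classical
  intro he
  obtain ⟨w0, hw0⟩ := (hT.isConnected c w).exists_walk_length_eq_dist
  have hP : w0.bypass.IsPath := SimpleGraph.Walk.bypass_isPath w0
  have hlen : w0.bypass.length = T.dist c w := by
    have h1 := SimpleGraph.Walk.length_bypass_le w0
    have h2 := SimpleGraph.dist_le w0.bypass
    omega
  generalize hPP : w0.bypass = P at hP hlen
  by_cases hx : x ∈ P.support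
  · have h1 : (P.takeUntil x hx).length = T.dist c x :=
      aux_tree_path_length hT (hP.takeUntil hx)
    have h3 := congrArg SimpleGraph.Walk.length (P.take_spec hx)
    rw [SimpleGraph.Walk.length_append] at h3
    have h4 : (P.dropUntil x hx).length ≠ 0 := by
      intro hz
      exact hwx.ne' (SimpleGraph.Walk.eq_of_length_eq_zero hz)
    omega
  · have hQ : (P.concat hwx).IsPath := by
      rw [SimpleGraph.Walk.concat_eq_append, SimpleGraph.Walk.isPath_def,
        SimpleGraph.Walk.support_append]
      simp only [SimpleGraph.Walk.support_cons, SimpleGraph.Walk.support_nil, List.tail_cons]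
      rw [List.nodup_append]
      refine ⟨hP.support_nodup, by simp, ?_⟩
      simp [List.disjoint_right]
      intro hc hm he; exact hx (he ▸ hm)
    have := aux_tree_path_length hT hQ
    rw [SimpleGraph.Walk.concat_eq_append, SimpleGraph.Walk.length_append] at this
    simp at this
    omega

lemma aux_common_nbr_unique (hT : T.IsTree) {a b m n : W}
    (hma : T.Adj a m) (hmb : T.Adj m b) (hna : T.Adj a n) (hnb : T.Adj n b)
    (hab : a ≠ b) : m = n := by
  have hp1 : (Walk.cons hma (Walk.cons hmb Walk.nil) : T.Walk a b).IsPath := by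
    rw [SimpleGraph.Walk.isPath_def]
    simp [hma.ne, hmb.ne, hab]
  have hp2 : (Walk.cons hna (Walk.cons hnb Walk.nil) : T.Walk a b).IsPath := by
    rw [SimpleGraph.Walk.isPath_def]
    simp [hna.ne, hnb.ne, hab]
  obtain ⟨q, -, hq⟩ := hT.existsUnique_path a b
  have e := (hq _ hp1).trans (hq _ hp2).symm
  have := congrArg SimpleGraph.Walk.support e
  simpa using this
end AuxTree

section FLemmas
variable {V : Type*} {T : SimpleGraph V} {S : Set (V ⊕ V)}

lemma prism_F2 (hS : IsGeoConvex (compPrism T) S) {p q : V} (hp : Sum.inl p ∈ S)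
    (hq : Sum.inr q ∈ S) (h : T.Adj p q) : Sum.inl q ∈ S := by
  have a1 : (compPrism T).Adj (Sum.inl p) (Sum.inl q) := h
  have a2 : (compPrism T).Adj (Sum.inl q) (Sum.inr q) := rfl
  have hdist : (compPrism T).dist (Sum.inl p) (Sum.inr q) = 2 :=
    aux_dist_eq_two (by simp [h.ne]) (by simp [h.ne]) a1 a2
  refine hS _ hp _ hq _ ⟨Walk.cons a1 (Walk.cons a2 Walk.nil), ?_, ?_, ?_⟩
  · rw [SimpleGraph.Walk.isPath_def]; simp [h.ne]
  · simp [hdist]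
  · simp

lemma prism_F5 (hS : IsGeoConvex (compPrism T) S) {p q : V} (hp : Sum.inl p ∈ S)
    (hq : Sum.inr q ∈ S) (hne : p ≠ q) (hna : ¬ T.Adj p q) : Sum.inr p ∈ S := by
  have a1 : (compPrism T).Adj (Sum.inl p) (Sum.inr p) := rfl
  have a2 : (compPrism T).Adj (Sum.inr p) (Sum.inr q) := by simp [hne, hna]
  have hdist : (compPrism T).dist (Sum.inl p) (Sum.inr q) = 2 :=
    aux_dist_eq_two (by simp [hne]) (by simp [hne]) a1 a2
  refine hS _ hp _ hq _ ⟨Walk.cons a1 (Walk.cons a2 Walk.nil), ?_, ?_, ?_⟩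
  · rw [SimpleGraph.Walk.isPath_def]; simp [hne]
  · simp [hdist]
  · simp

lemma prism_F6 (hS : IsGeoConvex (compPrism T) S) {p q : V} (hp : Sum.inr p ∈ S)
    (hq : Sum.inr q ∈ S) (hadj : T.Adj p q) {z : V} (h1 : ¬ T.Adj z p) (h2 : ¬ T.Adj z q)
    (h3 : z ≠ p) (h4 : z ≠ q) : Sum.inr z ∈ S := by
  have a1 : (compPrism T).Adj (Sum.inr p) (Sum.inr z) := by
    simp only [compPrism_adj_rr]
    exact ⟨Ne.symm h3, fun h => h1 h.symm⟩
  have a2 : (compPrism T).Adj (Sum.inr z) (Sum.inr q) := by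
    simp only [compPrism_adj_rr]
    exact ⟨h4, h2⟩
  have hdist : (compPrism T).dist (Sum.inr p) (Sum.inr q) = 2 :=
    aux_dist_eq_two (by simp [hadj.ne]) (by simp [hadj]) a1 a2
  refine hS _ hp _ hq _ ⟨Walk.cons a1 (Walk.cons a2 Walk.nil), ?_, ?_, ?_⟩
  · rw [SimpleGraph.Walk.isPath_def]; simp [hadj.ne, Ne.symm h3, h4]
  · simp [hdist]
  · simp

lemma prism_F3 (hS : IsGeoConvex (compPrism T) S) {p q m : V} (hp : Sum.inl p ∈ S)
    (hq : Sum.inl q ∈ S) (hne : p ≠ q) (hna : ¬ T.Adj p q)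
    (h1 : T.Adj p m) (h2 : T.Adj m q) : Sum.inl m ∈ S := by
  have a1 : (compPrism T).Adj (Sum.inl p) (Sum.inl m) := h1
  have a2 : (compPrism T).Adj (Sum.inl m) (Sum.inl q) := h2
  have hdist : (compPrism T).dist (Sum.inl p) (Sum.inl q) = 2 :=
    aux_dist_eq_two (by simp [hne]) (by simp [hna]) a1 a2
  refine hS _ hp _ hq _ ⟨Walk.cons a1 (Walk.cons a2 Walk.nil), ?_, ?_, ?_⟩
  · rw [SimpleGraph.Walk.isPath_def]; simp [h1.ne, h2.ne, hne]
  · simp [hdist]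
  · simp

lemma prism_F4 (hS : IsGeoConvex (compPrism T) S) {p q m1 m2 : V} (hp : Sum.inl p ∈ S)
    (hq : Sum.inl q ∈ S) (hne : p ≠ q) (hna : ¬ T.Adj p q)
    (hno : ∀ m, ¬ (T.Adj p m ∧ T.Adj m q))
    (h1 : T.Adj p m1) (h2 : T.Adj m1 m2) (h3 : T.Adj m2 q) :
    Sum.inl m1 ∈ S ∧ Sum.inl m2 ∈ S := by
  have a1 : (compPrism T).Adj (Sum.inl p) (Sum.inl m1) := h1
  have a2 : (compPrism T).Adj (Sum.inl m1) (Sum.inl m2) := h2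
  have a3 : (compPrism T).Adj (Sum.inl m2) (Sum.inl q) := h3
  have hno' : ∀ x, ¬ ((compPrism T).Adj (Sum.inl p) x ∧ (compPrism T).Adj x (Sum.inl q)) := by
    rintro (m | m) ⟨c1, c2⟩
    · exact hno m ⟨c1, c2⟩
    · exact hne ((compPrism_adj_lr.mp c1).trans (compPrism_adj_rl.mp c2))
  have hdist : (compPrism T).dist (Sum.inl p) (Sum.inl q) = 3 :=
    aux_dist_eq_three (by simp [hne]) (by simp [hna]) hno' a1 a2 a3
  have hm1q : m1 ≠ q := fun e => hna (e ▸ h1)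
  have hpm2 : p ≠ m2 := fun e => hna (e ▸ h3)
  have hgeo : ∀ w ∈ (Walk.cons a1 (Walk.cons a2 (Walk.cons a3 Walk.nil))).support, w ∈ S := by
    intro w hw
    refine hS _ hp _ hq _ ⟨Walk.cons a1 (Walk.cons a2 (Walk.cons a3 Walk.nil)), ?_, ?_, hw⟩
    · rw [SimpleGraph.Walk.isPath_def]; simp [h1.ne, h2.ne, h3.ne, hne, hm1q, hpm2]
    · simp [hdist]
  exact ⟨hgeo _ (by simp), hgeo _ (by simp)⟩

lemma prism_F0 (hS : IsGeoConvex (compPrism T) S) {u v : V} (hu : Sum.inl u ∈ S)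
    (hv : Sum.inl v ∈ S) (hne : u ≠ v) (hna : ¬ T.Adj u v)
    (hno : ∀ m, ¬ (T.Adj u m ∧ T.Adj m v)) :
    Sum.inr u ∈ S ∧ Sum.inr v ∈ S := by
  have a1 : (compPrism T).Adj (Sum.inl u) (Sum.inr u) := rfl
  have a2 : (compPrism T).Adj (Sum.inr u) (Sum.inr v) := by simp [hne, hna]
  have a3 : (compPrism T).Adj (Sum.inr v) (Sum.inl v) := rfl
  have hno' : ∀ x, ¬ ((compPrism T).Adj (Sum.inl u) x ∧ (compPrism T).Adj x (Sum.inl v)) := by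
    rintro (m | m) ⟨c1, c2⟩
    · exact hno m ⟨c1, c2⟩
    · exact hne ((compPrism_adj_lr.mp c1).trans (compPrism_adj_rl.mp c2))
  have hdist : (compPrism T).dist (Sum.inl u) (Sum.inl v) = 3 :=
    aux_dist_eq_three (by simp [hne]) (by simp [hna]) hno' a1 a2 a3
  have hgeo : ∀ w ∈ (Walk.cons a1 (Walk.cons a2 (Walk.cons a3 Walk.nil))).support, w ∈ S := by
    intro w hw
    refine hS _ hu _ hv _ ⟨Walk.cons a1 (Walk.cons a2 (Walk.cons a3 Walk.nil)), ?_, ?_, hw⟩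
    · rw [SimpleGraph.Walk.isPath_def]; simp [hne]
    · simp [hdist]
  exact ⟨hgeo _ (by simp), hgeo _ (by simp)⟩

end FLemmas

theorem stmt19 {V : Type*} [Fintype V] (T : SimpleGraph V) (hT : T.IsTree)
    (hd : graphDiam T = 4) (S : Set (V ⊕ V))
    (hS : IsGeoConvex (compPrism T) S) (hSp : S ≠ Set.univ)
    (u v : V) (hu : Sum.inl u ∈ S) (hv : Sum.inl v ∈ S) (huv : T.dist u v = 4) :
    S.ncard ≤ Nat.card V := by
  classical
  -- every distance is at most 4
  have hdiam : ∀ a b : V, T.dist a b ≤ 4 := by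
    intro a b
    have hb : ∀ d ∈ {d | ∃ x y : V, T.dist x y = d}, d ≤ Fintype.card V := by
      rintro d ⟨x, y, rfl⟩
      obtain ⟨w, hw⟩ := (hT.isConnected x y).exists_walk_length_eq_dist
      have h1 := SimpleGraph.dist_le w.bypass
      have h2 := (SimpleGraph.Walk.bypass_isPath w).length_lt
      omega
    have hmem : T.dist a b ∈ {d | ∃ x y : V, T.dist x y = d} := ⟨a, b, rfl⟩
    have hle := le_csSup ⟨Fintype.card V, hb⟩ hmem
    unfold graphDiam at hd
    omega
  have adj_dist1 : ∀ {a b : V}, T.Adj a b → T.dist a b = 1 := by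
    intro a b h
    have hP : (Walk.cons h Walk.nil : T.Walk a b).IsPath := by
      rw [SimpleGraph.Walk.isPath_def]; simp [h.ne]
    simpa using (aux_tree_path_length hT hP).symm
  have nadj : ∀ {a b : V}, 2 ≤ T.dist a b → ¬ T.Adj a b := by
    intro a b h hadj; rw [adj_dist1 hadj] at h; omega
  have ncom : ∀ {a b : V}, 3 ≤ T.dist a b → ∀ m, ¬ (T.Adj a m ∧ T.Adj m b) := by
    intro a b h m ⟨c1, c2⟩
    have := SimpleGraph.dist_le (Walk.cons c1 (Walk.cons c2 Walk.nil))
    simp at this; omega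
  have dist_of_path2 : ∀ {a m b : V}, T.Adj a m → T.Adj m b → a ≠ b → T.dist a b = 2 := by
    intro a m b ha hb hne
    have hP : (Walk.cons ha (Walk.cons hb Walk.nil) : T.Walk a b).IsPath := by
      rw [SimpleGraph.Walk.isPath_def]; simp [ha.ne, hb.ne, hne]
    simpa using (aux_tree_path_length hT hP).symm
  have dist_of_path3 : ∀ {a m n b : V}, T.Adj a m → T.Adj m n → T.Adj n b →
      a ≠ n → m ≠ b → a ≠ b → T.dist a b = 3 := by
    intro a m n b ha hm hn h1 h2 h3
    have hP : (Walk.cons ha (Walk.cons hm (Walk.cons hn Walk.nil)) : T.Walk a b).IsPath := by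
      rw [SimpleGraph.Walk.isPath_def]; simp [ha.ne, hm.ne, hn.ne, h1, h2, h3]
    simpa using (aux_tree_path_length hT hP).symm
  have hne_uv : u ≠ v := by
    intro h; rw [h, SimpleGraph.dist_self] at huv; omega
  -- set up the diametral path  u - x1 - x2 - x3 - v
  obtain ⟨w0, hw0⟩ := (hT.isConnected u v).exists_walk_length_eq_dist
  have hbP : w0.bypass.IsPath := SimpleGraph.Walk.bypass_isPath w0
  have hbl : w0.bypass.length = 4 := by
    have h1 := SimpleGraph.Walk.length_bypass_le w0
    have h2 := SimpleGraph.dist_le w0.bypass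
    omega
  obtain ⟨x1, x2, x3, h1, h2, h3, h4, hpe⟩ := aux_walk_length_four w0.bypass hbl
  have hsup := (SimpleGraph.Walk.isPath_def _).mp hbP
  rw [hpe] at hsup
  simp only [SimpleGraph.Walk.support_cons, SimpleGraph.Walk.support_nil] at hsup
  have n01 : u ≠ x1 := by simp at hsup; tauto
  have n02 : u ≠ x2 := by simp at hsup; tauto
  have n03 : u ≠ x3 := by simp at hsup; tauto
  have n12 : x1 ≠ x2 := by simp at hsup; tauto
  have n13 : x1 ≠ x3 := by simp at hsup; tauto
  have n14 : x1 ≠ v := by simp at hsup; tauto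
  have n24 : x2 ≠ v := by simp at hsup; tauto
  have n34 : x3 ≠ v := by simp at hsup; tauto
  have n23 : x2 ≠ x3 := h3.ne
  -- distances along the path
  have d_u1 : T.dist u x1 = 1 := adj_dist1 h1
  have d_u2 : T.dist u x2 = 2 := dist_of_path2 h1 h2 n02
  have d_u3 : T.dist u x3 = 3 := dist_of_path3 h1 h2 h3 n02 n13 n03
  have d_12 : T.dist x1 x2 = 1 := adj_dist1 h2
  have d_13 : T.dist x1 x3 = 2 := dist_of_path2 h2 h3 n13
  have d_1v : T.dist x1 v = 3 := dist_of_path3 h2 h3 h4 n13 n24 n14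
  have d_23 : T.dist x2 x3 = 1 := adj_dist1 h3
  have d_2v : T.dist x2 v = 2 := dist_of_path2 h3 h4 n24
  have d_3v : T.dist x3 v = 1 := adj_dist1 h4
  have d_2u : T.dist x2 u = 2 := by rw [SimpleGraph.dist_comm]; exact d_u2
  have d_21 : T.dist x2 x1 = 1 := by rw [SimpleGraph.dist_comm]; exact d_12
  have d_vu : T.dist v u = 4 := by rw [SimpleGraph.dist_comm]; exact huv
  have d_3u : T.dist x3 u = 3 := by rw [SimpleGraph.dist_comm]; exact d_u3
  have d_v1 : T.dist v x1 = 3 := by rw [SimpleGraph.dist_comm]; exact d_1v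
  have d_31 : T.dist x3 x1 = 2 := by rw [SimpleGraph.dist_comm]; exact d_13
  -- eccentricity of the centre x2 is at most 2
  have hecc : ∀ z, T.dist x2 z ≤ 2 := by
    intro z
    by_contra hle
    push_neg at hle
    obtain ⟨w0c, hw0c⟩ := (hT.isConnected x2 z).exists_walk_length_eq_dist
    have hP : w0c.bypass.IsPath := SimpleGraph.Walk.bypass_isPath w0c
    have hlenP : w0c.bypass.length = T.dist x2 z := by
      have hh1 := SimpleGraph.Walk.length_bypass_le w0c
      have hh2 := SimpleGraph.dist_le w0c.bypass
      omega
    generalize hPP : w0c.bypass = P at hP hlenP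
    have hkey : ¬ ((u ∈ P.support ∨ x1 ∈ P.support) ∧ (v ∈ P.support ∨ x3 ∈ P.support)) := by
      rintro ⟨hA, hB⟩
      rcases hA with h | h <;> rcases hB with h' | h' <;>
        [ have hord := aux_tree_ord hT hP h h';
          have hord := aux_tree_ord hT hP h h';
          have hord := aux_tree_ord hT hP h h';
          have hord := aux_tree_ord hT hP h h'] <;>
        [ (have e1 := huv; have e2 := d_vu);
          (have e1 := d_u3; have e2 := d_3u);
          (have e1 := d_1v; have e2 := d_v1);
          (have e1 := d_13; have e2 := d_31)] <;>
        omega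
    rw [not_and_or] at hkey
    rcases hkey with hk | hk
    · push_neg at hk
      obtain ⟨hk1, hk2⟩ := hk
      have hQ : (Walk.cons h1 (Walk.cons h2 P) : T.Walk u z).IsPath := by
        rw [SimpleGraph.Walk.cons_isPath_iff, SimpleGraph.Walk.cons_isPath_iff]
        refine ⟨⟨hP, hk2⟩, ?_⟩
        simp [n01, hk1]
      have := aux_tree_path_length hT hQ
      simp only [SimpleGraph.Walk.length_cons] at this
      have hzu := hdiam u z
      omega
    · push_neg at hk
      obtain ⟨hk1, hk2⟩ := hk
      have hQ : (Walk.cons h4.symm (Walk.cons h3.symm P) : T.Walk v z).IsPath := by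
        rw [SimpleGraph.Walk.cons_isPath_iff, SimpleGraph.Walk.cons_isPath_iff]
        refine ⟨⟨hP, hk2⟩, ?_⟩
        simp [Ne.symm n34, hk1]
      have := aux_tree_path_length hT hQ
      simp only [SimpleGraph.Walk.length_cons] at this
      have hzv := hdiam v z
      omega
  -- u and v are leaves
  have hNu : ∀ y, T.Adj u y → y = x1 := by
    intro y hy
    by_contra hne
    have hy2 : y ≠ x2 := fun e => by rw [e] at hy; rw [adj_dist1 hy] at d_u2; omega
    have hy3 : y ≠ x3 := fun e => by rw [e] at hy; rw [adj_dist1 hy] at d_u3; omega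
    have hyv : y ≠ v := fun e => by rw [e] at hy; rw [adj_dist1 hy] at huv; omega
    have hQ : (Walk.cons hy.symm (Walk.cons h1 (Walk.cons h2 (Walk.cons h3
        (Walk.cons h4 Walk.nil)))) : T.Walk y v).IsPath := by
      rw [SimpleGraph.Walk.isPath_def]
      simp [hy.ne', hne, hy2, hy3, hyv, n01, n02, n03, hne_uv, n12, n13, n14, n23, n24, n34]
    have := aux_tree_path_length hT hQ
    simp only [SimpleGraph.Walk.length_cons, SimpleGraph.Walk.length_nil] at this
    have := hdiam y v
    omega
  have hNv : ∀ y, T.Adj v y → y = x3 := by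
    intro y hy
    by_contra hne
    have hy2 : y ≠ x2 := fun e => by
      rw [e] at hy; rw [SimpleGraph.dist_comm, adj_dist1 hy] at d_2v; omega
    have hy1 : y ≠ x1 := fun e => by
      rw [e] at hy; rw [SimpleGraph.dist_comm, adj_dist1 hy] at d_1v; omega
    have hyu : y ≠ u := fun e => by
      rw [e] at hy; rw [SimpleGraph.dist_comm, adj_dist1 hy] at huv; omega
    have hQ : (Walk.cons hy.symm (Walk.cons h4.symm (Walk.cons h3.symm (Walk.cons h2.symm
        (Walk.cons h1.symm Walk.nil)))) : T.Walk y u).IsPath := by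
      rw [SimpleGraph.Walk.isPath_def]
      simp [hy.ne', hne, hy2, hy1, hyu, Ne.symm n34, Ne.symm n24, Ne.symm n14,
        Ne.symm n23, Ne.symm n13, Ne.symm n03, Ne.symm n12, Ne.symm n02, Ne.symm n01, Ne.symm hne_uv]
    have := aux_tree_path_length hT hQ
    simp only [SimpleGraph.Walk.length_cons, SimpleGraph.Walk.length_nil] at this
    have := hdiam y u
    omega
  -- Complementary prism facts
  obtain ⟨hBu, hBv⟩ := prism_F0 hS hu hv hne_uv (nadj (by omega)) (ncom (by omega))
  have hAB : ∀ p, Sum.inl p ∈ S → Sum.inr p ∈ S := by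
    intro p hp
    by_cases hpu : p = u
    · rwa [hpu]
    by_cases hpv : p = v
    · rwa [hpv]
    by_cases hadjU : T.Adj p u
    · have hadjV : ¬ T.Adj p v := by
        intro h'
        have := SimpleGraph.dist_le (Walk.cons hadjU.symm (Walk.cons h' Walk.nil))
        simp at this; omega
      exact prism_F5 hS hp hBv hpv hadjV
    · exact prism_F5 hS hp hBu hpu hadjU
  by_cases hsep : ∃ p, Sum.inl p ∈ S ∧ ∃ q, Sum.inl q ∈ S ∧ p ≠ q ∧ T.dist p q ≤ 2
  · -- Case I : S would be everything, contradiction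
    exfalso
    obtain ⟨p, hpS, q, hqS, hpq, hd2⟩ := hsep
    have hd0 : T.dist p q ≠ 0 := fun h => hpq ((hT.isConnected p q).dist_eq_zero_iff.mp h)
    have hedge : ∃ w x, Sum.inl w ∈ S ∧ Sum.inl x ∈ S ∧ T.Adj w x := by
      by_cases hone : T.dist p q = 1
      · obtain ⟨wlk, hl⟩ := (hT.isConnected p q).exists_walk_length_eq_dist
        exact ⟨p, q, hpS, hqS, aux_adj_of_walk_length_one wlk (by rw [hl, hone])⟩
      · have htwo : T.dist p q = 2 := by omega
        obtain ⟨wlk, hl⟩ := (hT.isConnected p q).exists_walk_length_eq_dist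
        obtain ⟨m, hm1, hm2⟩ := aux_walk_length_two wlk (by rw [hl, htwo])
        have hna : ¬ T.Adj p q := nadj (by omega)
        exact ⟨p, m, hpS, prism_F3 hS hpS hqS hpq hna hm1 hm2, hm1⟩
    obtain ⟨w, x, hwS, hxS, hwx⟩ := hedge
    have hdne := aux_tree_adj_dist_ne (c := x2) hT hwx
    have hw2 := hecc w
    have hx2 := hecc x
    have hmin : ∃ w', Sum.inl w' ∈ S ∧ T.dist x2 w' ≤ 1 := by
      by_cases hcase : T.dist x2 w ≤ 1
      · exact ⟨w, hwS, hcase⟩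
      · exact ⟨x, hxS, by omega⟩
    obtain ⟨w', hw'S, hw'd⟩ := hmin
    have hcS : Sum.inl x2 ∈ S := by
      by_cases h0 : T.dist x2 w' = 0
      · have he : x2 = w' := (hT.isConnected x2 w').dist_eq_zero_iff.mp h0
        rwa [he]
      · have hd1 : T.dist x2 w' = 1 := by omega
        have hadj : T.Adj x2 w' := by
          obtain ⟨wlk, hl⟩ := (hT.isConnected x2 w').exists_walk_length_eq_dist
          exact aux_adj_of_walk_length_one wlk (by rw [hl, hd1])
        by_cases hx1w : w' = x1
        · subst hx1w
          exact (prism_F4 hS hv hw'S (Ne.symm n14) (nadj (by omega))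
            (ncom (by omega)) h4.symm h3.symm h2.symm).2
        · have hx1w' : x1 ≠ w' := fun e => hx1w e.symm
          have huw' : u ≠ w' := fun e => by rw [← e] at hd1; omega
          have hduw : T.dist u w' = 3 := dist_of_path3 h1 h2 hadj n02 hx1w' huw'
          exact (prism_F4 hS hu hw'S huw' (nadj (by omega)) (ncom (by omega))
            h1 h2 hadj).2
    have hx1S : Sum.inl x1 ∈ S := prism_F3 hS hu hcS n02 (nadj (by omega)) h1 h2
    have hx3S : Sum.inl x3 ∈ S := prism_F3 hS hcS hv n24 (nadj (by omega)) h3 h4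
    have hBall : ∀ z, Sum.inr z ∈ S := by
      intro z
      by_contra hz
      have hz1 : T.Adj z x1 := by
        by_cases hzx1 : z = x1
        · exact absurd (hzx1 ▸ hAB _ hx1S) hz
        by_cases hzu : z = u
        · exact absurd (hzu ▸ hBu) hz
        by_cases ha : T.Adj z x1
        · exact ha
        by_cases hau : T.Adj z u
        · exact absurd (hNu z hau.symm) hzx1
        · exact absurd (prism_F6 hS hBu (hAB _ hx1S) h1 hau ha hzu hzx1) hz
      have hz3 : T.Adj z x3 := by
        by_cases hzx3 : z = x3
        · exact absurd (hzx3 ▸ hAB _ hx3S) hz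
        by_cases hzv : z = v
        · exact absurd (hzv ▸ hBv) hz
        by_cases ha : T.Adj z x3
        · exact ha
        by_cases hav : T.Adj z v
        · exact absurd (hNv z hav.symm) hzx3
        · exact absurd (prism_F6 hS hBv (hAB _ hx3S) h4.symm hav ha hzv hzx3) hz
      have hz2 : z = x2 := aux_common_nbr_unique hT hz1.symm hz3 h2 h3 n13
      exact absurd (hz2 ▸ hAB _ hcS) hz
    have hAall : ∀ z, Sum.inl z ∈ S := by
      have key : ∀ (a b : V) (wlk : T.Walk a b), Sum.inl a ∈ S → Sum.inl b ∈ S := by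
        intro a b wlk
        induction wlk with
        | nil => exact id
        | cons hadj p ih => exact fun ha => ih (prism_F2 hS ha (hBall _) hadj)
      intro z
      obtain ⟨wlk⟩ := hT.isConnected u z
      exact key u z wlk hu
    exact hSp (Set.eq_univ_iff_forall.mpr (by rintro (z | z); exacts [hAall z, hBall z]))
  · -- Case II : counting
    push_neg at hsep
    have hnb : ∀ p : V, ∃ y, T.Adj p y := by
      intro p
      by_cases hp : p = u
      · exact ⟨x1, hp ▸ h1⟩
      · obtain ⟨wlk, hl⟩ := (hT.isConnected p u).exists_walk_length_eq_dist
        cases wlk with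
        | nil => exact absurd rfl hp
        | cons hadj _ => exact ⟨_, hadj⟩
    choose f hf using hnb
    set A : Set V := {w : V | Sum.inl w ∈ S} with hA
    set B : Set V := {w : V | Sum.inr w ∈ S} with hB
    have hfB : ∀ p ∈ A, f p ∈ Bᶜ := by
      intro p hp hfp
      have hfpS : Sum.inl (f p) ∈ S := prism_F2 hS hp hfp (hf p)
      have hdle : T.dist p (f p) ≤ 2 := by
        have := SimpleGraph.dist_le (Walk.cons (hf p) Walk.nil)
        simp at this; omega
      have := hsep p hp (f p) hfpS (hf p).ne
      omega
    have hinj : Set.InjOn f A := by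
      intro p hp q hq he
      by_contra hne
      have hq2 : T.Adj (f p) q := (he ▸ hf q).symm
      have hdle : T.dist p q ≤ 2 := by
        have := SimpleGraph.dist_le (Walk.cons (hf p) (Walk.cons hq2 Walk.nil))
        simp at this; omega
      have := hsep p hp q hq hne
      omega
    have hS_eq : S = (Sum.inl '' A) ∪ (Sum.inr '' B) := by
      ext y
      cases y with
      | inl a => simp [hA, hB]
      | inr a => simp [hA, hB]
    have hdisj : Disjoint (Sum.inl '' A) (Sum.inr '' B : Set (V ⊕ V)) := by
      rw [Set.disjoint_left]
      rintro y ⟨a, -, rfl⟩ ⟨b, -, hb⟩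
      cases hb
    have hcard : S.ncard = A.ncard + B.ncard := by
      rw [hS_eq, Set.ncard_union_eq hdisj (Set.toFinite _) (Set.toFinite _),
        Set.ncard_image_of_injective _ Sum.inl_injective,
        Set.ncard_image_of_injective _ Sum.inr_injective]
    have hAcard : A.ncard ≤ Bᶜ.ncard := by
      calc A.ncard = (f '' A).ncard := (Set.ncard_image_of_injOn hinj).symm
        _ ≤ Bᶜ.ncard := Set.ncard_le_ncard (by rintro y ⟨p, hp, rfl⟩; exact hfB p hp)
            (Set.toFinite _)
    have hcompl := Set.ncard_add_ncard_compl B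
    rw [hcard]
    omega
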